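/- For any integer ℓ ≥ 2, if M is a simple matroid with no U_{2,ℓ+2}-minor, then the number of elements of M is at most (ℓ^{r(M)} - 1)/(ℓ - 1). -/

import Mathlib

open Matroid Set

namespace GrowthRate

variable {α : Type*}

/-- The rank of a set in a matroid: the supremum of cardinalities of independent subsets. -/
noncomputable def eRk (M : Matroid α) (X : Set α) : ℕ∞ :=
  ⨆ I ∈ {I : Set α | M.Indep I ∧ I ⊆ X}, I.encard

/-- The rank of a matroid. -/
noncomputable def eRank (M : Matroid α) : ℕ∞ := eRk M M.E

/-- Rank as a natural number (for finite matroids). -/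
noncomputable def rk (M : Matroid α) (X : Set α) : ℕ := (eRk M X).toNat

/-- Rank of a matroid as a natural number. -/
noncomputable def rank (M : Matroid α) : ℕ := (eRank M).toNat

/-- Deletion of a set of elements. -/
noncomputable def delete (M : Matroid α) (D : Set α) : Matroid α := M ↾ (M.E \ D)

/-- Contraction of a set of elements, defined via duality. -/
noncomputable def contract (M : Matroid α) (C : Set α) : Matroid α := (delete M✶ C)✶

/-- `N` is a minor of `M` if it is obtained by a contraction followed by a deletion. -/
def IsMinor (N M : Matroid α) : Prop := ∃ C D : Set α, N = delete (contract M C) D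

/-- The number of points (rank-one flats) of `M` contained in `X`. -/
noncomputable def nPoints (M : Matroid α) (X : Set α) : ℕ :=
  {P : Set α | M.IsFlat P ∧ eRk M P = 1 ∧ P ⊆ X}.ncard

/-- `ε(M)`: the number of points (rank-one flats) of `M`. -/
noncomputable def eps (M : Matroid α) : ℕ := {P : Set α | M.IsFlat P ∧ eRk M P = 1}.ncard

/-- A matroid is simple if all singletons and pairs of ground elements are independent. -/
def Simple (M : Matroid α) : Prop :=
  ∀ e ∈ M.E, ∀ f ∈ M.E, M.Indep {e} ∧ (e ≠ f → M.Indep {e, f})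

/-- `M` has a `U_{2,m}`-minor: a minor that is simple of rank two with `m` elements. -/
def HasUnifLineMinor (M : Matroid α) (m : ℕ) : Prop :=
  ∃ N : Matroid α, IsMinor N M ∧ eRank N = 2 ∧ Simple N ∧ N.E.encard = m

/-- A matroid is weakly round if its ground set is not the union of a set of rank
at most `r(M)-2` and a set of rank at most `r(M)-1`. -/
def WeaklyRound (M : Matroid α) : Prop :=
  ¬ ∃ A B : Set α, A ∪ B = M.E ∧ eRk M A + 2 ≤ eRank M ∧ eRk M B + 1 ≤ eRank M

/-- `q` is a prime power. -/
def IsPrimePower (q : ℕ) : Prop := ∃ p n : ℕ, p.Prime ∧ 0 < n ∧ q = p ^ n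

/-- `M` is isomorphic to the projective geometry `PG(n-1, |F|)` over the finite field `F`:
there is a representation `f` of `M` by vectors in `F^n` such that distinct elements get
non-parallel vectors and every direction in `F^n` is represented. -/
def IsPG (M : Matroid α) (F : Type) [Field F] [Fintype F] (n : ℕ) : Prop :=
  ∃ f : α → (Fin n → F),
    (∀ I ⊆ M.E, (M.Indep I ↔ LinearIndependent F (fun x : I => f x))) ∧
    (∀ e ∈ M.E, ∀ e' ∈ M.E, ∀ c : F, f e' = c • f e → e = e') ∧
    (∀ v : Fin n → F, v ≠ 0 → ∃ e ∈ M.E, ∃ c : F, c ≠ 0 ∧ v = c • f e)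

/-- `M` is `(q,k)`-overfull. -/
noncomputable def Overfull (M : Matroid α) (q k : ℕ) : Prop :=
  ((q : ℚ) ^ (rank M + k) - 1) / ((q : ℚ) - 1)
      - (q : ℚ) * ((q : ℚ) ^ (2 * k) - 1) / ((q : ℚ) ^ 2 - 1) < (eps M : ℚ)


section Aux

variable {M : Matroid α} {I X S : Set α} {e f : α}

lemma le_eRk_of_indep (hI : M.Indep I) (hIX : I ⊆ X) : I.encard ≤ eRk M X :=
  le_biSup _ (show I ∈ {I : Set α | M.Indep I ∧ I ⊆ X} from ⟨hI, hIX⟩)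

lemma eRk_le_iff {n : ℕ∞} : eRk M X ≤ n ↔ ∀ I, M.Indep I → I ⊆ X → I.encard ≤ n := by
  rw [eRk, iSup₂_le_iff]
  exact ⟨fun h I hI hIX => h I ⟨hI, hIX⟩, fun h I hI => h I hI.1 hI.2⟩

lemma contract_ground (M : Matroid α) (C : Set α) : (contract M C).E = M.E \ C := rfl

lemma contract_contract (M : Matroid α) (C C' : Set α) :
    contract (contract M C) C' = contract M (C ∪ C') := by
  simp only [contract, delete, dual_dual, dual_ground, restrict_ground_eq]
  rw [Matroid.restrict_restrict_eq _ diff_subset, diff_diff]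

lemma contract_empty (M : Matroid α) : contract M ∅ = M := by
  show (M✶ ↾ (M✶.E \ ∅))✶ = M
  rw [diff_empty, restrict_ground_eq_self, dual_dual]

lemma restrict_isMinor (M : Matroid α) (hS : S ⊆ M.E) : IsMinor (M ↾ S) M := by
  refine ⟨∅, M.E \ S, ?_⟩
  rw [contract_empty]
  show M ↾ S = M ↾ (M.E \ (M.E \ S))
  rw [diff_diff_cancel_left hS]

lemma isMinor_of_isMinor_contract {N : Matroid α} {C : Set α}
    (h : IsMinor N (contract M C)) : IsMinor N M := by
  obtain ⟨C', D, rfl⟩ := h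
  exact ⟨C ∪ C', D, by rw [contract_contract]⟩

lemma contract_singleton_indep_iff (he : M.Indep {e}) :
    (contract M {e}).Indep I ↔ I ⊆ M.E \ {e} ∧ M.Indep (insert e I) := by
  have hX : M.E \ {e} ⊆ M✶.E := by rw [dual_ground]; exact diff_subset
  show ((M✶ ↾ (M✶.E \ {e}))✶).Indep I ↔ _
  rw [dual_ground]
  constructor
  · intro h
    obtain ⟨hIX, B, hB, hdj⟩ := dual_indep_iff_exists'.mp h
    rw [restrict_ground_eq] at hIX
    rw [Matroid.isBase_restrict_iff hX] at hB
    obtain ⟨-, B₁, hB₁, hdjBB₁⟩ := dual_indep_iff_exists'.mp hB.indep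
    obtain ⟨B₂, hB₂, heB₂, hB₂sub⟩ := he.exists_isBase_subset_union_isBase hB₁
    have hdjBB₂ : Disjoint B B₂ := by
      refine Set.disjoint_left.mpr fun x hxB hxB₂ => ?_
      rcases hB₂sub hxB₂ with hx | hx
      · exact (hB.subset hxB).2 hx
      · exact (Set.disjoint_left.mp hdjBB₁ hxB) hx
    have hsub : (M.E \ {e}) \ B ⊆ B₂ := by
      intro x hx
      by_contra hxB₂
      have hind : M✶.Indep (insert x B) := by
        rw [dual_indep_iff_exists']
        refine ⟨insert_subset hx.1.1 (hB.subset.trans diff_subset), B₂, hB₂, ?_⟩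
        refine Set.disjoint_left.mpr fun y hy => ?_
        rcases Set.mem_insert_iff.mp hy with rfl | hyB
        · exact hxB₂
        · exact Set.disjoint_left.mp hdjBB₂ hyB
      have heq := hB.eq_of_subset_indep hind (subset_insert _ _)
        (insert_subset hx.1 hB.subset)
      exact hx.2 (heq ▸ mem_insert x B)
    refine ⟨hIX, hB₂.indep.subset ?_⟩
    refine insert_subset (heB₂ rfl) fun x hx => hsub ⟨hIX hx, Set.disjoint_left.mp hdj hx⟩
  · rintro ⟨hIX, hind⟩
    obtain ⟨B₂, hB₂, hsub⟩ := hind.exists_isBase_superset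
    have heB₂ : e ∈ B₂ := hsub (mem_insert _ _)
    have hBX : M.E \ B₂ ⊆ M.E \ {e} := diff_subset_diff_right (singleton_subset_iff.mpr heB₂)
    have hBind : M✶.Indep (M.E \ B₂) :=
      dual_indep_iff_exists'.mpr ⟨diff_subset, B₂, hB₂, disjoint_sdiff_left⟩
    have hBbasis : M✶.IsBasis (M.E \ B₂) (M.E \ {e}) := by
      refine hBind.isBasis_of_forall_insert hBX fun x hx => ?_
      refine ⟨fun hcon => ?_, ?_⟩
      · obtain ⟨-, B₃, hB₃, hdj₃⟩ := dual_indep_iff_exists'.mp hcon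
        have hB₃B₂ : B₃ ⊆ B₂ := by
          intro y hy
          by_contra hyB₂
          exact (Set.disjoint_right.mp hdj₃ hy)
            (Or.inr ⟨hB₃.subset_ground hy, hyB₂⟩)
        have heq := hB₃.eq_of_subset_isBase hB₂ hB₃B₂
        have hxB₂ : x ∈ B₂ := by
          by_contra h'
          exact hx.2 ⟨hx.1.1, h'⟩
        exact (Set.disjoint_left.mp hdj₃ (mem_insert x _)) (heq ▸ hxB₂)
      · rw [dual_ground]
        exact insert_subset hx.1.1 diff_subset
    have hBase : (M✶ ↾ (M.E \ {e})).IsBase (M.E \ B₂) := by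
      rw [Matroid.isBase_restrict_iff hX]; exact hBbasis
    refine dual_indep_iff_exists'.mpr ⟨by rwa [restrict_ground_eq], M.E \ B₂, hBase, ?_⟩
    exact Set.disjoint_left.mpr fun x hx hxB =>
      hxB.2 (hsub (mem_insert_of_mem _ hx))

lemma eRank_restrict (M : Matroid α) (S : Set α) : eRank (M ↾ S) = eRk M S := by
  apply le_antisymm
  · rw [eRank, eRk_le_iff]
    intro I hI _
    obtain ⟨h1, h2⟩ := Matroid.restrict_indep_iff.mp hI
    exact le_eRk_of_indep h1 h2
  · rw [eRk_le_iff]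
    intro I hI hIS
    exact le_eRk_of_indep (M := M ↾ S)
      (Matroid.restrict_indep_iff.mpr ⟨hI, hIS⟩) hIS

lemma eRank_contract_le {r : ℕ} (he : M.Indep {e}) (hr : eRank M ≤ (r + 1 : ℕ)) :
    eRank (contract M {e}) ≤ (r : ℕ∞) := by
  rw [eRank, eRk_le_iff]
  intro I hI _
  rw [contract_singleton_indep_iff he] at hI
  have h1 : (insert e I).encard ≤ eRank M :=
    le_eRk_of_indep hI.2 hI.2.subset_ground
  rw [encard_insert_of_notMem (fun h => (hI.1 h).2 rfl)] at h1
  have h2 := h1.trans hr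
  rw [Nat.cast_add, Nat.cast_one, ENat.add_le_add_iff_right (by simp)] at h2
  exact h2

lemma ncard_biUnion_le_mul {γ : Type*} {s : Set γ} {t : γ → Set α} (hs : s.Finite) {k : ℕ}
    (hcard : ∀ a ∈ s, (t a).ncard ≤ k) :
    (⋃ a ∈ s, t a).ncard ≤ k * s.ncard := by
  refine Set.Finite.induction_on
    (motive := fun s _ => (∀ a ∈ s, (t a).ncard ≤ k) → (⋃ a ∈ s, t a).ncard ≤ k * s.ncard)
    s hs (by simp) ?_ hcard
  clear hcard hs s
  intro a s ha hsf ih hcard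
  · rw [Set.biUnion_insert]
    calc (t a ∪ ⋃ x ∈ s, t x).ncard ≤ (t a).ncard + (⋃ x ∈ s, t x).ncard :=
          Set.ncard_union_le _ _
      _ ≤ k + k * s.ncard := by
          exact Nat.add_le_add (hcard a (mem_insert _ _))
            (ih fun b hb => hcard b (mem_insert_of_mem _ hb))
      _ = k * (insert a s).ncard := by
          rw [Set.ncard_insert_of_notMem ha hsf]; ring

end Aux


lemma kung_aux (ℓ : ℕ) (hℓ : 2 ≤ ℓ) (r : ℕ) :
    ∀ (M : Matroid α), M.E.Finite → ¬ HasUnifLineMinor M (ℓ + 2) → eRank M ≤ (r : ℕ∞) →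
    ∀ S : Set α, S ⊆ M.E → (∀ e ∈ S, M.Indep {e}) →
      (∀ e ∈ S, ∀ f ∈ S, e ≠ f → M.Indep {e, f}) →
      (ℓ - 1) * S.ncard + 1 ≤ ℓ ^ r := by
  induction r with
  | zero =>
    intro M hfin hminor hrank S hSE hS1 hS2
    have hS : S = ∅ := by
      by_contra hne
      obtain ⟨e, he⟩ := Set.nonempty_iff_ne_empty.mpr hne
      have h1 : ({e} : Set α).encard ≤ eRank M :=
        le_eRk_of_indep (hS1 e he) (hS1 e he).subset_ground
      rw [Set.encard_singleton] at h1
      have := h1.trans hrank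
      simp at this
    simp [hS]
  | succ r ih =>
    intro M hfin hminor hrank S hSE hS1 hS2
    rcases Set.eq_empty_or_nonempty S with rfl | ⟨e, he⟩
    · simpa using Nat.one_le_pow _ _ (by omega)
    have hSfin : S.Finite := hfin.subset hSE
    have heind : M.Indep {e} := hS1 e he
    set N := contract M {e} with hN
    have hNE : N.E = M.E \ {e} := rfl
    have hNfin : N.E.Finite := hfin.subset (hNE ▸ diff_subset)
    have hNrank : eRank N ≤ (r : ℕ∞) := eRank_contract_le heind (by exact_mod_cast hrank)
    have hNminor : ¬ HasUnifLineMinor N (ℓ + 2) := by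
      rintro ⟨N', hm, h2, hs, hc⟩
      exact hminor ⟨N', isMinor_of_isMinor_contract hm, h2, hs, hc⟩
    have hNindep : ∀ I : Set α, N.Indep I ↔ I ⊆ M.E \ {e} ∧ M.Indep (insert e I) :=
      fun I => contract_singleton_indep_iff heind
    -- every element of S \ {e} is a nonloop of N
    have hsingle : ∀ g ∈ S \ {e}, N.Indep {g} := by
      intro g hg
      rw [hNindep]
      refine ⟨singleton_subset_iff.mpr ⟨hSE hg.1, hg.2⟩, ?_⟩
      have := hS2 e he g hg.1 (fun h => hg.2 h.symm)
      simpa using this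
    -- choose a maximal pairwise-N-independent subset of S \ {e}
    set 𝒞 : Set (Set α) := {T | T ⊆ S \ {e} ∧ ∀ f ∈ T, ∀ g ∈ T, f ≠ g → N.Indep {f, g}} with h𝒞
    have h𝒞fin : 𝒞.Finite :=
      ((hSfin.subset diff_subset).finite_subsets).subset fun T hT => hT.1
    have h𝒞ne : 𝒞.Nonempty := ⟨∅, by simp [h𝒞]⟩
    obtain ⟨S', hS'mem, hS'max⟩ := Set.Finite.exists_maximalFor Set.ncard 𝒞 h𝒞fin h𝒞ne
    obtain ⟨hS'sub, hS'pair⟩ := hS'mem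
    have hS'fin : S'.Finite := hSfin.subset (hS'sub.trans diff_subset)
    -- the "lines through e": class of f
    set C : α → Set α := fun f => {g ∈ S \ {e} | g = f ∨ ¬ N.Indep {f, g}} with hC
    have hCfin : ∀ f, (C f).Finite := fun f => (hSfin.subset diff_subset).subset (fun g hg => hg.1)
    -- covering
    have hcover : S \ {e} ⊆ ⋃ f ∈ S', C f := by
      intro g hg
      by_contra hgout
      simp only [Set.mem_iUnion, not_exists] at hgout
      have hgS' : g ∉ S' := fun h => hgout g h ⟨hg, Or.inl rfl⟩
      have hgind : ∀ f ∈ S', f ≠ g → N.Indep {f, g} := by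
        intro f hf hfg
        by_contra hcon
        exact hgout f hf ⟨hg, Or.inr hcon⟩
      have hT : insert g S' ∈ 𝒞 := by
        refine ⟨insert_subset hg hS'sub, ?_⟩
        intro a ha b hb hab
        rcases Set.mem_insert_iff.mp ha with rfl | haS'
        · rcases Set.mem_insert_iff.mp hb with rfl | hbS'
          · exact absurd rfl hab
          · rw [Set.pair_comm]; exact hgind b hbS' (Ne.symm hab)
        · rcases Set.mem_insert_iff.mp hb with rfl | hbS'
          · exact hgind a haS' hab
          · exact hS'pair a haS' b hbS' hab
      have hle : S'.ncard ≤ (insert g S').ncard := Set.ncard_le_ncard_insert g S'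
      have heq := hS'max hT hle
      rw [Set.ncard_insert_of_notMem hgS' hS'fin] at heq
      omega
    -- each class has at most ℓ elements
    have hclass : ∀ f ∈ S', (C f).ncard ≤ ℓ := by
      intro f hf
      by_contra hcon
      push_neg at hcon
      have hfS : f ∈ S \ {e} := hS'sub hf
      have hfC : f ∈ C f := ⟨hfS, Or.inl rfl⟩
      have hTcard : ℓ ≤ (C f \ {f}).ncard := by
        have := Set.ncard_diff_singleton_add_one hfC (hCfin f)
        omega
      obtain ⟨T, hTsub, hTcardeq⟩ := Set.exists_subset_card_eq hTcard
      have hTfin : T.Finite := ((hCfin f).subset diff_subset).subset hTsub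
      have heT : e ∉ insert f T := by
        rintro (rfl | heT)
        · exact hfS.2 rfl
        · exact ((hTsub heT).1.1).2 rfl
      have hfT : f ∉ T := fun h => (hTsub h).2 rfl
      set T' : Set α := insert e (insert f T) with hT'
      have hT'fin : T'.Finite := (hTfin.insert f).insert e
      have hT'S : T' ⊆ S := by
        refine insert_subset he (insert_subset hfS.1 ?_)
        exact fun x hx => (hTsub hx).1.1.1
      have hT'E : T' ⊆ M.E := hT'S.trans hSE
      have hT'card : T'.ncard = ℓ + 2 := by
        rw [Set.ncard_insert_of_notMem heT (hTfin.insert f),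
          Set.ncard_insert_of_notMem hfT hTfin, hTcardeq]
      have hfe : f ≠ e := fun h => hfS.2 h
      -- the restriction to T' is the forbidden line
      set N₁ := M ↾ T' with hN₁
      have hN₁E : N₁.E = T' := rfl
      have hN₁simple : Simple N₁ := by
        intro a ha b hb
        rw [hN₁E] at ha hb
        constructor
        · exact Matroid.restrict_indep_iff.mpr ⟨hS1 a (hT'S ha), singleton_subset_iff.mpr ha⟩
        · intro hab
          exact Matroid.restrict_indep_iff.mpr
            ⟨hS2 a (hT'S ha) b (hT'S hb) hab, insert_subset ha (singleton_subset_iff.mpr hb)⟩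
      have hef_indep : M.Indep {e, f} := hS2 e he f hfS.1 (Ne.symm hfe)
      have hN₁rank : eRank N₁ = 2 := by
        rw [hN₁, eRank_restrict]
        apply le_antisymm
        · rw [eRk_le_iff]
          intro I hI hIT'
          by_contra hcon2
          push_neg at hcon2
          have h2lt : ({e, f} : Set α).encard < I.encard := by
            rwa [Set.encard_pair (Ne.symm hfe)]
          obtain ⟨x, hxI, hxind⟩ := hef_indep.augment hI h2lt
          have hxT : x ∈ T := by
            rcases hIT' hxI.1 with rfl | hx
            · exact absurd (Set.mem_insert _ _) hxI.2
            · rcases hx with rfl | hx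
              · exact absurd (Set.mem_insert_of_mem _ (Set.mem_singleton _)) hxI.2
              · exact hx
          have hxCf : x ∈ C f \ {f} := hTsub hxT
          have hxne : ¬ N.Indep {f, x} := by
            rcases hxCf.1.2 with h | h
            · exact absurd h hxCf.2
            · exact h
          apply hxne
          rw [hNindep]
          have hxS : x ∈ S \ {e} := hxCf.1.1
          refine ⟨?_, ?_⟩
          · exact Set.insert_subset ⟨hSE hfS.1, hfS.2⟩
              (singleton_subset_iff.mpr ⟨hSE hxS.1, hxS.2⟩)
          · have : insert e ({f, x} : Set α) = insert x ({e, f} : Set α) := by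
              ext y; simp; tauto
            rw [this]
            exact hxind
        · have h2 : ({e, f} : Set α).encard = 2 := Set.encard_pair (Ne.symm hfe)
          rw [← h2]
          exact le_eRk_of_indep hef_indep
            (insert_subset (Set.mem_insert _ _)
              (singleton_subset_iff.mpr (Set.mem_insert_of_mem _ (Set.mem_insert _ _))))
      have hN₁card : N₁.E.encard = ((ℓ + 2 : ℕ) : ℕ∞) := by
        rw [hN₁E, ← hT'fin.cast_ncard_eq, hT'card]
      exact hminor ⟨N₁, restrict_isMinor M hT'E, hN₁rank, hN₁simple, hN₁card⟩
    -- apply the induction hypothesis to N and S'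
    have hIH := ih N hNfin hNminor hNrank S'
      (fun x hx => hNE ▸ ⟨hSE (hS'sub hx).1, (hS'sub hx).2⟩)
      (fun g hg => hsingle g (hS'sub hg))
      hS'pair
    -- counting
    have hdiffcard : (S \ {e}).ncard ≤ ℓ * S'.ncard := by
      have h1 : (S \ {e}).ncard ≤ (⋃ f ∈ S', C f).ncard :=
        Set.ncard_le_ncard hcover (hS'fin.biUnion (fun f _ => hCfin f))
      exact h1.trans (ncard_biUnion_le_mul hS'fin hclass)
    have hScard : S.ncard = (S \ {e}).ncard + 1 :=
      (Set.ncard_diff_singleton_add_one he hSfin).symm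
    -- arithmetic
    obtain ⟨k, rfl⟩ : ∃ k, ℓ = k + 1 := ⟨ℓ - 1, by omega⟩
    have hgoal : (k + 1 - 1) * S.ncard + 1 ≤ (k + 1) ^ (r + 1) := by
      simp only [Nat.add_sub_cancel] at hIH ⊢
      have hp : (k + 1) ^ (r + 1) = (k + 1) ^ r * (k + 1) := pow_succ _ _
      rw [hp]
      nlinarith [hIH, hdiffcard, hScard]
    exact hgoal

/-- Kung's theorem: a simple matroid with no `U_{2,ℓ+2}`-minor has at most
`(ℓ^r - 1)/(ℓ-1)` elements, where `r` is its rank. -/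
theorem statement_1 {α : Type*} (ℓ : ℕ) (hℓ : 2 ≤ ℓ) (M : Matroid α) [M.Finite]
    (hM : Simple M) (hminor : ¬ HasUnifLineMinor M (ℓ + 2)) :
    (M.E.ncard : ℚ) ≤ ((ℓ : ℚ) ^ rank M - 1) / ((ℓ : ℚ) - 1) := by
  have hfinE : M.E.Finite := M.ground_finite
  have htop : eRank M ≠ ⊤ := by
    have h1 : eRank M ≤ M.E.encard :=
      eRk_le_iff.mpr fun I hI hIE => Set.encard_mono hIE
    exact ne_top_of_le_ne_top hfinE.encard_lt_top.ne h1
  have hrank : eRank M ≤ ((rank M : ℕ) : ℕ∞) := by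
    rw [rank, ENat.coe_toNat htop]
  have key := kung_aux ℓ hℓ (rank M) M hfinE hminor hrank M.E subset_rfl
    (fun e heE => (hM e heE e heE).1)
    (fun e heE f hfE hef => (hM e heE f hfE).2 hef)
  have hl2 : (2 : ℚ) ≤ (ℓ : ℚ) := by exact_mod_cast hℓ
  rw [le_div_iff₀ (by linarith)]
  have hkey : ((ℓ : ℚ) - 1) * (M.E.ncard : ℚ) + 1 ≤ (ℓ : ℚ) ^ rank M := by
    have h2 := (Nat.cast_le (α := ℚ)).mpr key
    push_cast [Nat.cast_sub (by omega : 1 ≤ ℓ)] at h2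
    convert h2 using 2
  linarith

end GrowthRate
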